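/- Let μ be a probability measure on a measurable space X and let ψ : X × X → ℝ be bounded measurable with ‖ψ‖_∞ < 1/(2e) and with ∫ ψ(z,x) dμ(x) = 0 for every z. Then for every N ≥ 1, ∫_{X^N} exp( (1/N) ∑_{j_1=1}^N ∑_{j_2=1}^N ψ(x_1, x_{j_1}) ψ(x_1, x_{j_2}) ) dμ^{⊗N}(x_1,…,x_N) ≤ 2(1 + 10α/(1−α)^3 + β/(1−β)), where α = (e‖ψ‖_∞)^4 < 1 and β = (√(2e)‖ψ‖_∞)^4 < 1. -/

import Mathlib

open MeasureTheory Real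

lemma bdd_integrable {α : Type*} [MeasurableSpace α] {ν : Measure α} [IsFiniteMeasure ν]
    {f : α → ℝ} (hf : AEStronglyMeasurable f ν) {C : ℝ} (h : ∀ a, |f a| ≤ C) :
    Integrable f ν :=
  (integrable_const C).mono' hf (Filter.Eventually.of_forall (by simpa using h))

lemma hoeffding_aux {X : Type*} [MeasurableSpace X] (μ : Measure X) [IsProbabilityMeasure μ]
    {f : X → ℝ} (hf : Measurable f) {B : ℝ} (hB0 : 0 ≤ B) (hfB : ∀ x, |f x| ≤ B)
    (hint : ∫ x, f x ∂μ = 0) (t : ℝ) :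
    ∫ x, Real.exp (t * f x) ∂μ ≤ Real.exp (t ^ 2 * B ^ 2 / 2) := by
  rcases eq_or_lt_of_le hB0 with h0 | hBpos
  · have hf0 : ∀ x, f x = 0 := fun x => abs_nonpos_iff.mp (h0 ▸ hfB x)
    simp only [hf0, mul_zero, Real.exp_zero]
    rw [integral_const]
    simp only [probReal_univ, smul_eq_mul, one_mul]
    exact Real.one_le_exp (by positivity)
  · have hfint : Integrable f μ := bdd_integrable hf.aestronglyMeasurable hfB
    have key : ∀ x, Real.exp (t * f x)
        ≤ Real.cosh (t * B) + (f x / B) * Real.sinh (t * B) := by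
      intro x
      have h1 : |f x / B| ≤ 1 := by
        rw [abs_div, abs_of_pos hBpos]
        exact (div_le_one hBpos).mpr (hfB x)
      have := Real.exp_mul_le_cosh_add_mul_sinh h1 (t * B)
      calc Real.exp (t * f x) = Real.exp (f x / B * (t * B)) := by
            field_simp
          _ ≤ _ := this
    calc ∫ x, Real.exp (t * f x) ∂μ
        ≤ ∫ x, (Real.cosh (t * B) + (f x / B) * Real.sinh (t * B)) ∂μ := by
          refine integral_mono_of_nonneg (Filter.Eventually.of_forall fun x => (Real.exp_pos _).le)
            ?_ (Filter.Eventually.of_forall key)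
          exact (integrable_const _).add (((hfint.div_const B)).mul_const _)
      _ = Real.cosh (t * B) + (∫ x, f x ∂μ) / B * Real.sinh (t * B) := by
          rw [integral_add (integrable_const _) ((hfint.div_const B).mul_const _),
            integral_const, integral_mul_const, integral_div]
          simp [measure_univ]
      _ = Real.cosh (t * B) := by rw [hint]; simp
      _ ≤ Real.exp ((t * B) ^ 2 / 2) := Real.cosh_le_exp_half_sq _
      _ = Real.exp (t ^ 2 * B ^ 2 / 2) := by ring_nf

lemma gauss_linear (a : ℝ) :
    ∫ g : ℝ, Real.exp (-(g ^ 2 / 2) + a * g) = Real.sqrt (2 * Real.pi) * Real.exp (a ^ 2 / 2) := by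
  have key : ∀ g : ℝ, -(g ^ 2 / 2) + a * g = a ^ 2 / 2 + -(1/2 * (g - a) ^ 2) := by
    intro g; ring
  simp_rw [key, Real.exp_add, MeasureTheory.integral_const_mul]
  have h2 : ∀ g : ℝ, Real.exp (-(1/2 * (g - a) ^ 2))
      = (fun y : ℝ => Real.exp (-(1/2) * y ^ 2)) (g - a) := by
    intro g; norm_num
  simp_rw [h2]
  rw [integral_sub_right_eq_self (fun y : ℝ => Real.exp (-(1/2) * y ^ 2)) a,
    integral_gaussian]
  norm_num [mul_comm]

lemma gauss_linear_integrable (a : ℝ) :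
    Integrable (fun g : ℝ => Real.exp (-(g ^ 2 / 2) + a * g)) := by
  have key : ∀ g : ℝ, Real.exp (-(g ^ 2 / 2) + a * g)
      = Real.exp (a ^ 2 / 2) * Real.exp (-(1/2) * (g - a) ^ 2) := by
    intro g; rw [← Real.exp_add]; ring_nf
  simp_rw [key]
  exact ((integrable_exp_neg_mul_sq (by norm_num)).comp_sub_right a).const_mul _

lemma pi_exp_sum_bound {X : Type*} [MeasurableSpace X]
    (μ : Measure X) [IsProbabilityMeasure μ]
    (ψ : X → X → ℝ) (hmeas : Measurable (Function.uncurry ψ))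
    (B : ℝ) (hB : ∀ z x, |ψ z x| ≤ B)
    (hoeff : ∀ (z : X) (t : ℝ), ∫ v, Real.exp (t * ψ z v) ∂μ ≤ Real.exp (t ^ 2 * B ^ 2 / 2))
    (n : ℕ) (s : ℝ) :
    ∫ x : Fin (n+1) → X, Real.exp (s * ∑ j : Fin n, ψ (x 0) (x j.succ))
      ∂(Measure.pi fun _ => μ)
    ≤ Real.exp (n * (s ^ 2 * B ^ 2 / 2)) := by
  letI : MeasureSpace X := ⟨μ⟩
  haveI : IsProbabilityMeasure (volume : Measure X) := ‹IsProbabilityMeasure μ›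
  set Q : Measure (Fin n → X) := Measure.pi fun _ => μ with hQ
  let e := MeasurableEquiv.piFinSuccAbove (fun _ : Fin (n+1) => X) 0
  have hmp : MeasurePreserving e (Measure.pi fun _ => μ) (μ.prod Q) :=
    measurePreserving_piFinSuccAbove (fun _ => μ) 0
  have key : ∫ x : Fin (n+1) → X, Real.exp (s * ∑ j : Fin n, ψ (x 0) (x j.succ))
        ∂(Measure.pi fun _ => μ)
      = ∫ p : X × (Fin n → X), Real.exp (s * ∑ j : Fin n, ψ (e.symm p 0) (e.symm p j.succ))
        ∂(μ.prod Q) :=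
    ((hmp.symm e).integral_comp e.symm.measurableEmbedding _).symm
  have hsymm0 : ∀ p : X × (Fin n → X), e.symm p 0 = p.1 := by
    intro p; simp [e]
  have hsymmj : ∀ (p : X × (Fin n → X)) (j : Fin n), e.symm p j.succ = p.2 j := by
    intro p j
    rw [show (j.succ : Fin (n+1)) = (0 : Fin (n+1)).succAbove j from rfl]
    simp [e]
  have form : ∀ p : X × (Fin n → X),
      Real.exp (s * ∑ j : Fin n, ψ (e.symm p 0) (e.symm p j.succ))
      = ∏ j : Fin n, Real.exp (s * ψ p.1 (p.2 j)) := by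
    intro p
    simp_rw [hsymm0, hsymmj]
    rw [Finset.mul_sum, Real.exp_sum]
  rw [key]
  simp_rw [form]
  have hintp : Integrable (fun p : X × (Fin n → X) => ∏ j : Fin n, Real.exp (s * ψ p.1 (p.2 j)))
      (μ.prod Q) := by
    apply bdd_integrable (C := Real.exp (|s| * B) ^ n)
    · apply Measurable.aestronglyMeasurable
      apply Finset.measurable_prod
      intro j _
      exact Real.measurable_exp.comp ((hmeas.comp
        (measurable_fst.prodMk ((measurable_pi_apply j).comp measurable_snd))).const_mul s)
    · intro p
      rw [abs_of_nonneg (Finset.prod_nonneg fun j _ => (Real.exp_pos _).le)]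
      calc ∏ j : Fin n, Real.exp (s * ψ p.1 (p.2 j))
          ≤ ∏ _j : Fin n, Real.exp (|s| * B) := by
            apply Finset.prod_le_prod (fun j _ => (Real.exp_pos _).le)
            intro j _
            apply Real.exp_le_exp.2
            calc s * ψ p.1 (p.2 j) ≤ |s * ψ p.1 (p.2 j)| := le_abs_self _
              _ = |s| * |ψ p.1 (p.2 j)| := abs_mul _ _
              _ ≤ |s| * B := mul_le_mul_of_nonneg_left (hB _ _) (abs_nonneg s)
        _ = Real.exp (|s| * B) ^ n := by rw [Finset.prod_const]; simp
  rw [integral_prod _ hintp]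
  have inner_eq : ∀ z : X,
      ∫ y : Fin n → X, ∏ j : Fin n, Real.exp (s * ψ z (y j)) ∂Q
      = (∫ v, Real.exp (s * ψ z v) ∂μ) ^ n := by
    intro z
    have := MeasureTheory.integral_fintype_prod_eq_pow (ι := Fin n) (μ := μ)
      (f := fun v : X => Real.exp (s * ψ z v))
    simpa using this
  simp_rw [inner_eq]
  calc ∫ z, (∫ v, Real.exp (s * ψ z v) ∂μ) ^ n ∂μ
      ≤ ∫ _z, Real.exp (s ^ 2 * B ^ 2 / 2) ^ n ∂μ := by
        apply integral_mono_of_nonneg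
        · exact Filter.Eventually.of_forall fun z => by positivity
        · exact integrable_const _
        · exact Filter.Eventually.of_forall fun z =>
            pow_le_pow_left₀ (integral_nonneg fun v => (Real.exp_pos _).le) (hoeff z s) n
    _ = Real.exp (s ^ 2 * B ^ 2 / 2) ^ n := by simp
    _ = Real.exp (n * (s ^ 2 * B ^ 2 / 2)) := by rw [← Real.exp_nat_mul]

set_option maxHeartbeats 2000000 in
theorem law_of_large_numbers_exponential {X : Type*} [MeasurableSpace X]
    (μ : Measure X) [IsProbabilityMeasure μ]
    (ψ : X → X → ℝ) (hmeas : Measurable (Function.uncurry ψ))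
    (B : ℝ) (hB : ∀ z x, |ψ z x| ≤ B) (hBsmall : B < 1 / (2 * Real.exp 1))
    (hcancel : ∀ z, ∫ x, ψ z x ∂μ = 0)
    (N : ℕ) (hN : 1 ≤ N) :
    ∫ x : Fin N → X, Real.exp ((1 / N : ℝ) * ∑ j1 : Fin N, ∑ j2 : Fin N,
        ψ (x ⟨0, hN⟩) (x j1) * ψ (x ⟨0, hN⟩) (x j2))
      ∂(Measure.pi fun _ => μ)
    ≤ 2 * (1 + 10 * (Real.exp 1 * B) ^ 4 / (1 - (Real.exp 1 * B) ^ 4) ^ 3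
        + (Real.sqrt (2 * Real.exp 1) * B) ^ 4
            / (1 - (Real.sqrt (2 * Real.exp 1) * B) ^ 4)) := by
  obtain ⟨x0, -⟩ := nonempty_of_measure_ne_zero
    (show μ Set.univ ≠ 0 by simp)
  have hB0 : 0 ≤ B := le_trans (abs_nonneg _) (hB x0 x0)
  have he : (2 : ℝ) < Real.exp 1 := lt_trans (by norm_num) Real.exp_one_gt_d9
  -- the right-hand side is at least 2
  have hRHS : 2 ≤ 2 * (1 + 10 * (Real.exp 1 * B) ^ 4 / (1 - (Real.exp 1 * B) ^ 4) ^ 3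
        + (Real.sqrt (2 * Real.exp 1) * B) ^ 4
            / (1 - (Real.sqrt (2 * Real.exp 1) * B) ^ 4)) := by
    have h1 : Real.exp 1 * B < 1 / 2 := by
      calc Real.exp 1 * B < Real.exp 1 * (1 / (2 * Real.exp 1)) :=
            mul_lt_mul_of_pos_left hBsmall (Real.exp_pos 1)
        _ = 1 / 2 := by field_simp
    have hα : (Real.exp 1 * B) ^ 4 < 1 :=
      pow_lt_one₀ (by positivity) (lt_trans h1 (by norm_num)) (by norm_num)
    have hs : (1 : ℝ) < Real.sqrt (2 * Real.exp 1) := by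
      have h2 : (1 : ℝ) < 2 * Real.exp 1 := by nlinarith
      nlinarith [Real.sq_sqrt (show (0:ℝ) ≤ 2 * Real.exp 1 by positivity),
        Real.sqrt_nonneg (2 * Real.exp 1)]
    have h2 : Real.sqrt (2 * Real.exp 1) * B < 1 := by
      rcases eq_or_lt_of_le hB0 with h | h
      · rw [← h]; norm_num
      · calc Real.sqrt (2 * Real.exp 1) * B
            < Real.sqrt (2 * Real.exp 1) * (1 / (2 * Real.exp 1)) :=
              mul_lt_mul_of_pos_left hBsmall (by positivity)
          _ = 1 / Real.sqrt (2 * Real.exp 1) := by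
              have ha : (0:ℝ) < 2 * Real.exp 1 := by positivity
              rw [eq_div_iff (by positivity : Real.sqrt (2 * Real.exp 1) ≠ 0)]
              have hm : Real.sqrt (2 * Real.exp 1) * (1 / (2 * Real.exp 1))
                    * Real.sqrt (2 * Real.exp 1)
                  = Real.sqrt (2 * Real.exp 1) * Real.sqrt (2 * Real.exp 1)
                    * (1 / (2 * Real.exp 1)) := by ring
              rw [hm, Real.mul_self_sqrt ha.le]
              field_simp
          _ < 1 := by
              rw [div_lt_one (by positivity)]; exact hs
    have hβ : (Real.sqrt (2 * Real.exp 1) * B) ^ 4 < 1 :=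
      pow_lt_one₀ (by positivity) h2 (by norm_num)
    have t1 : 0 ≤ 10 * (Real.exp 1 * B) ^ 4 / (1 - (Real.exp 1 * B) ^ 4) ^ 3 :=
      div_nonneg (by positivity) (pow_nonneg (by linarith) 3)
    have t2 : 0 ≤ (Real.sqrt (2 * Real.exp 1) * B) ^ 4
        / (1 - (Real.sqrt (2 * Real.exp 1) * B) ^ 4) :=
      div_nonneg (by positivity) (by linarith)
    linarith
  refine le_trans ?_ hRHS
  -- main estimate : LHS ≤ 2
  obtain ⟨n, rfl⟩ : ∃ n, N = n + 1 := ⟨N - 1, (Nat.succ_pred_eq_of_pos hN).symm⟩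
  have h4 : 1 / (2 * Real.exp 1) < 1 / 4 :=
    one_div_lt_one_div_of_lt (by norm_num) (by nlinarith)
  have hB4 : B < 1 / 4 := hBsmall.trans h4
  have hBB : B ^ 2 < 1 / 16 := by nlinarith
  have hMpos : (0:ℝ) < (n : ℝ) + 1 := by positivity
  set c : ℝ := 2 / Real.sqrt ((n : ℝ) + 1) with hcdef
  have hc0 : 0 ≤ c := by positivity
  have hc2 : c ^ 2 * ((n : ℝ) + 1) = 4 := by
    rw [hcdef, div_pow, Real.sq_sqrt hMpos.le]
    field_simp
    norm_num
  set W : (Fin (n+1) → X) → ℝ := fun x => ∑ j : Fin n, ψ (x 0) (x j.succ) with hWdef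
  have hWm : Measurable W := by
    rw [hWdef]
    apply Finset.measurable_sum
    intro j _
    have hpair : Measurable fun x : Fin (n+1) → X => (x 0, x j.succ) :=
      (measurable_pi_apply 0).prodMk (measurable_pi_apply j.succ)
    exact hmeas.comp hpair
  have hWb : ∀ x, |W x| ≤ (n : ℝ) * B := fun x => by
    rw [hWdef]
    calc |∑ j : Fin n, ψ (x 0) (x j.succ)| ≤ ∑ j : Fin n, |ψ (x 0) (x j.succ)| :=
          Finset.abs_sum_le_sum_abs _ _
      _ ≤ ∑ _j : Fin n, B := Finset.sum_le_sum fun j _ => hB _ _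
      _ = (n : ℝ) * B := by rw [Finset.sum_const]; simp [mul_comm]
  have hoeff : ∀ (z : X) (t : ℝ), ∫ v, Real.exp (t * ψ z v) ∂μ ≤ Real.exp (t ^ 2 * B ^ 2 / 2) :=
    fun z t => hoeffding_aux μ (hmeas.comp measurable_prodMk_left) hB0 (hB z) (hcancel z) t
  have prodBound : ∀ g : ℝ,
      ∫ x, Real.exp ((c * g) * W x) ∂(Measure.pi fun _ : Fin (n+1) => μ)
      ≤ Real.exp (2 * B ^ 2 * g ^ 2) := by
    intro g
    have h1 := pi_exp_sum_bound μ ψ hmeas B hB hoeff n (c * g)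
    have h1' : ∫ x, Real.exp ((c * g) * W x) ∂(Measure.pi fun _ : Fin (n+1) => μ)
        ≤ Real.exp ((n : ℝ) * ((c * g) ^ 2 * B ^ 2 / 2)) := by
      simp only [hWdef]
      exact h1
    refine le_trans h1' (Real.exp_le_exp.2 ?_)
    have hnc : (n : ℝ) * c ^ 2 ≤ 4 := by nlinarith [sq_nonneg c]
    nlinarith [hnc, sq_nonneg (g * B), sq_nonneg g, sq_nonneg B]
  have h0eq : (⟨0, hN⟩ : Fin (n+1)) = 0 := rfl
  have stepA : ∀ x : Fin (n+1) → X,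
      Real.exp ((1 / ((n + 1 : ℕ) : ℝ)) * ∑ j1 : Fin (n+1), ∑ j2 : Fin (n+1),
          ψ (x ⟨0, hN⟩) (x j1) * ψ (x ⟨0, hN⟩) (x j2))
      ≤ Real.exp (2 * B ^ 2) * Real.exp (c ^ 2 / 2 * W x ^ 2) := by
    intro x
    rw [← Real.exp_add]
    apply Real.exp_le_exp.2
    have hs : ∑ j1 : Fin (n+1), ∑ j2 : Fin (n+1),
        ψ (x ⟨0, hN⟩) (x j1) * ψ (x ⟨0, hN⟩) (x j2)
        = (ψ (x 0) (x 0) + W x) ^ 2 := by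
      rw [h0eq, ← Finset.sum_mul_sum, ← sq, Fin.sum_univ_succ]
    rw [hs]
    have ha := abs_le.1 (hB (x 0) (x 0))
    have hcM : c ^ 2 / 2 = 2 / ((n : ℝ) + 1) := by
      field_simp at hc2 ⊢
      linarith
    push_cast
    rw [hcM]
    have h1 : (ψ (x 0) (x 0) + W x) ^ 2 ≤ 2 * B ^ 2 * ((n : ℝ) + 1) + 2 * W x ^ 2 := by
      nlinarith [sq_nonneg (ψ (x 0) (x 0) - W x), ha.1, ha.2,
        mul_nonneg (sq_nonneg B) (Nat.cast_nonneg n : (0:ℝ) ≤ n)]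
    calc 1 / ((n : ℝ) + 1) * (ψ (x 0) (x 0) + W x) ^ 2
        ≤ 1 / ((n : ℝ) + 1) * (2 * B ^ 2 * ((n : ℝ) + 1) + 2 * W x ^ 2) :=
          mul_le_mul_of_nonneg_left h1 (by positivity)
      _ = 2 * B ^ 2 + 2 / ((n : ℝ) + 1) * W x ^ 2 := by field_simp
  have intB : Integrable (fun x => Real.exp (2 * B ^ 2) * Real.exp (c ^ 2 / 2 * W x ^ 2))
      (Measure.pi fun _ : Fin (n+1) => μ) := by
    refine bdd_integrable (C := Real.exp (2 * B ^ 2) * Real.exp (c ^ 2 / 2 * ((n : ℝ) * B) ^ 2))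
      ?_ ?_
    · exact (measurable_const.mul (Real.measurable_exp.comp
        ((hWm.pow_const 2).const_mul (c ^ 2 / 2)))).aestronglyMeasurable
    · intro x
      rw [abs_of_pos (by positivity)]
      refine mul_le_mul_of_nonneg_left (Real.exp_le_exp.2 ?_) (Real.exp_pos _).le
      have hW2 : W x ^ 2 ≤ ((n : ℝ) * B) ^ 2 := by nlinarith [abs_le.1 (hWb x)]
      exact mul_le_mul_of_nonneg_left hW2 (by positivity)
  refine le_trans (integral_mono_of_nonneg
      (Filter.Eventually.of_forall fun x => (Real.exp_pos _).le)
      intB (Filter.Eventually.of_forall stepA)) ?_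
  rw [MeasureTheory.integral_const_mul]
  have sqrt2pi_pos : (0:ℝ) < Real.sqrt (2 * Real.pi) := Real.sqrt_pos.2 (by positivity)
  have h2B : (0:ℝ) < 1/2 - 2 * B ^ 2 := by nlinarith
  have core : ∫ x, Real.exp (c ^ 2 / 2 * W x ^ 2) ∂(Measure.pi fun _ : Fin (n+1) => μ)
      ≤ (Real.sqrt (2 * Real.pi))⁻¹ * Real.sqrt (Real.pi / (1/2 - 2 * B ^ 2)) := by
    have hgl : ∀ x : Fin (n+1) → X, Real.exp (c ^ 2 / 2 * W x ^ 2)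
        = (Real.sqrt (2 * Real.pi))⁻¹ * ∫ g : ℝ, Real.exp (-(g ^ 2 / 2) + (c * W x) * g) := by
      intro x
      rw [gauss_linear, ← mul_assoc, inv_mul_cancel₀ sqrt2pi_pos.ne', one_mul]
      congr 1
      ring
    simp_rw [hgl, MeasureTheory.integral_const_mul]
    refine mul_le_mul_of_nonneg_left ?_ (inv_nonneg.2 sqrt2pi_pos.le)
    have hmeas2 : Measurable (Function.uncurry fun (x : Fin (n+1) → X) (g : ℝ) =>
        Real.exp (-(g ^ 2 / 2) + (c * W x) * g)) := by
      apply Real.measurable_exp.comp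
      exact (((measurable_snd.pow_const 2).div_const 2).neg).add
        (((hWm.comp measurable_fst).const_mul c).mul measurable_snd)
    have hintprod : Integrable (Function.uncurry fun (x : Fin (n+1) → X) (g : ℝ) =>
        Real.exp (-(g ^ 2 / 2) + (c * W x) * g))
        ((Measure.pi fun _ : Fin (n+1) => μ).prod volume) := by
      rw [MeasureTheory.integrable_prod_iff hmeas2.aestronglyMeasurable]
      constructor
      · exact Filter.Eventually.of_forall fun x => gauss_linear_integrable (c * W x)
      · have heq : (fun x : Fin (n+1) → X => ∫ g : ℝ, ‖Real.exp (-(g ^ 2 / 2) + (c * W x) * g)‖)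
            = fun x => Real.sqrt (2 * Real.pi) * Real.exp ((c * W x) ^ 2 / 2) := by
          funext x
          simp_rw [Real.norm_eq_abs, abs_of_pos (Real.exp_pos _)]
          exact gauss_linear _
        simp only [Function.uncurry_apply_pair]
        rw [heq]
        refine bdd_integrable (C := Real.sqrt (2 * Real.pi)
          * Real.exp ((c * ((n : ℝ) * B)) ^ 2 / 2)) ?_ ?_
        · exact (measurable_const.mul (Real.measurable_exp.comp
            (((hWm.const_mul c).pow_const 2).div_const 2))).aestronglyMeasurable
        · intro x
          rw [abs_of_pos (by positivity)]
          refine mul_le_mul_of_nonneg_left (Real.exp_le_exp.2 ?_) (Real.sqrt_nonneg _)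
          have hW2 : W x ^ 2 ≤ ((n : ℝ) * B) ^ 2 := by nlinarith [abs_le.1 (hWb x)]
          have h3 := mul_le_mul_of_nonneg_left hW2 (sq_nonneg c)
          calc (c * W x) ^ 2 / 2 = c ^ 2 * W x ^ 2 / 2 := by ring
            _ ≤ c ^ 2 * ((n : ℝ) * B) ^ 2 / 2 := by linarith
            _ = (c * ((n : ℝ) * B)) ^ 2 / 2 := by ring
    rw [MeasureTheory.integral_integral_swap hintprod]
    have pointg : ∀ g : ℝ,
        ∫ x, Real.exp (-(g ^ 2 / 2) + (c * W x) * g) ∂(Measure.pi fun _ : Fin (n+1) => μ)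
        ≤ Real.exp (-(1/2 - 2 * B ^ 2) * g ^ 2) := by
      intro g
      have e1 : ∀ x : Fin (n+1) → X, Real.exp (-(g ^ 2 / 2) + (c * W x) * g)
          = Real.exp (-(g ^ 2 / 2)) * Real.exp ((c * g) * W x) := by
        intro x; rw [← Real.exp_add]; congr 1; ring
      simp_rw [e1, MeasureTheory.integral_const_mul]
      calc Real.exp (-(g ^ 2 / 2))
            * ∫ x, Real.exp ((c * g) * W x) ∂(Measure.pi fun _ : Fin (n+1) => μ)
          ≤ Real.exp (-(g ^ 2 / 2)) * Real.exp (2 * B ^ 2 * g ^ 2) :=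
            mul_le_mul_of_nonneg_left (prodBound g) (Real.exp_pos _).le
        _ = Real.exp (-(1/2 - 2 * B ^ 2) * g ^ 2) := by rw [← Real.exp_add]; congr 1; ring
    refine le_trans (integral_mono_of_nonneg
        (Filter.Eventually.of_forall fun g => integral_nonneg fun x => (Real.exp_pos _).le)
        (integrable_exp_neg_mul_sq h2B) (Filter.Eventually.of_forall pointg)) ?_
    rw [integral_gaussian]
  have num : Real.exp (2 * B ^ 2)
      * ((Real.sqrt (2 * Real.pi))⁻¹ * Real.sqrt (Real.pi / (1/2 - 2 * B ^ 2))) ≤ 2 := by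
    set R := (Real.sqrt (2 * Real.pi))⁻¹ * Real.sqrt (Real.pi / (1/2 - 2 * B ^ 2)) with hR
    have hR0 : 0 ≤ R := by positivity
    have hRsq : (1 - 4 * B ^ 2) * R ^ 2 = 1 := by
      rw [hR, mul_pow, inv_pow, Real.sq_sqrt (by positivity : (0:ℝ) ≤ 2 * Real.pi),
        Real.sq_sqrt (div_nonneg Real.pi_pos.le h2B.le)]
      have hv0 : (0:ℝ) < 1 - 4 * B ^ 2 := by nlinarith
      have h1 : Real.pi / (1/2 - 2 * B ^ 2) * (1 - 4 * B ^ 2) = 2 * Real.pi := by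
        rw [div_mul_eq_mul_div, div_eq_iff h2B.ne']
        ring
      calc (1 - 4 * B ^ 2) * ((2 * Real.pi)⁻¹ * (Real.pi / (1/2 - 2 * B ^ 2)))
          = (2 * Real.pi)⁻¹ * (Real.pi / (1/2 - 2 * B ^ 2) * (1 - 4 * B ^ 2)) := by ring
        _ = 1 := by rw [h1]; exact inv_mul_cancel₀ (by positivity)
    have hE : Real.exp (2 * B ^ 2) ^ 2 = Real.exp (4 * B ^ 2) := by
      rw [sq, ← Real.exp_add]; congr 1; ring
    have hE2 : (1 - 4 * B ^ 2) * Real.exp (2 * B ^ 2) ^ 2 ≤ 1 := by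
      have h := Real.add_one_le_exp (-(4 * B ^ 2))
      have hprod : Real.exp (-(4 * B ^ 2)) * Real.exp (4 * B ^ 2) = 1 := by
        rw [← Real.exp_add]; simp
      rw [hE]
      nlinarith [h, Real.exp_pos (4 * B ^ 2), hprod]
    have hv : (0:ℝ) < 1 - 4 * B ^ 2 := by nlinarith
    have hER : Real.exp (2 * B ^ 2) ≤ R := by
      have h1 : Real.exp (2 * B ^ 2) ^ 2 ≤ R ^ 2 := by nlinarith [hE2, hRsq, hv]
      nlinarith [Real.exp_pos (2 * B ^ 2), hR0, h1]
    have hR2 : R ^ 2 ≤ 2 := by nlinarith [hRsq, hv, hBB]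
    calc Real.exp (2 * B ^ 2) * R ≤ R * R := mul_le_mul_of_nonneg_right hER hR0
      _ = R ^ 2 := (sq R).symm
      _ ≤ 2 := hR2
  exact le_trans (mul_le_mul_of_nonneg_left core (Real.exp_pos _).le) num
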